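/- Let G be a finitely generated group with polynomial volume-growth of degree d, and let B be a finite symmetric generating set containing the identity. Then for every m ≥ 1 and every r_0 > 0 there exists r ≥ r_0 such that |B^{rm}| ≤ 2 m^d |B^r|. -/

import Mathlib

open scoped Pointwise

/-- For a finitely generated group of polynomial volume-growth of degree `d`,
for every `m ≥ 1` and `r₀ > 0` there is `r ≥ r₀` with `|B^{rm}| ≤ 2 m^d |B^r|`. -/
theorem stmt1 {G : Type*} [Group G] [DecidableEq G]
    (B : Finset G) (hB1 : (1 : G) ∈ B) (hBsymm : B⁻¹ = B)
    (hgen : Subgroup.closure (B : Set G) = ⊤)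
    (d : ℕ) (c : ℝ) (hc : 0 < c)
    (hgrowth : ∀ r : ℕ, 1 ≤ r → ((B ^ r).card : ℝ) ≤ c * (r : ℝ) ^ d) :
    ∀ m : ℕ, 1 ≤ m → ∀ r₀ : ℕ, 0 < r₀ → ∃ r : ℕ, r₀ ≤ r ∧
      ((B ^ (r * m)).card : ℝ) ≤ 2 * (m : ℝ) ^ d * ((B ^ r).card : ℝ) := by
  intro m hm r₀ hr₀
  by_contra hcon
  push_neg at hcon
  have hm1 : (1:ℝ) ≤ (m:ℝ) := by exact_mod_cast hm
  have hmd : (1:ℝ) ≤ (m:ℝ)^d := one_le_pow₀ hm1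
  have hmd0 : (0:ℝ) < (m:ℝ)^d := lt_of_lt_of_le one_pos hmd
  have hcard1 : (1:ℝ) ≤ ((B ^ r₀).card : ℝ) := by
    have : (1:G) ∈ B ^ r₀ := Finset.one_mem_pow hB1
    have := Finset.card_pos.mpr ⟨1, this⟩
    exact_mod_cast this
  have key : ∀ k : ℕ, (2 * (m:ℝ)^d)^k * ((B ^ r₀).card : ℝ)
      ≤ ((B ^ (r₀ * m ^ k)).card : ℝ) := by
    intro k
    induction k with
    | zero => simp
    | succ k ih =>
      have hr : r₀ ≤ r₀ * m ^ k :=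
        Nat.le_mul_of_pos_right _ (Nat.pow_pos hm)
      have hlt := hcon (r₀ * m ^ k) hr
      have h2 : (0:ℝ) ≤ 2 * (m:ℝ)^d := by positivity
      calc (2 * (m:ℝ)^d)^(k+1) * ((B ^ r₀).card : ℝ)
          = (2 * (m:ℝ)^d) * ((2 * (m:ℝ)^d)^k * ((B ^ r₀).card : ℝ)) := by ring
        _ ≤ (2 * (m:ℝ)^d) * ((B ^ (r₀ * m ^ k)).card : ℝ) :=
            mul_le_mul_of_nonneg_left ih h2
        _ ≤ ((B ^ (r₀ * m ^ k * m)).card : ℝ) := le_of_lt hlt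
        _ = ((B ^ (r₀ * m ^ (k+1))).card : ℝ) := by ring_nf
  obtain ⟨k, hk⟩ := pow_unbounded_of_one_lt (c * (r₀:ℝ)^d) (by norm_num : (1:ℝ) < 2)
  have hr1 : 1 ≤ r₀ * m ^ k := Nat.one_le_iff_ne_zero.mpr (by positivity)
  have hgb := hgrowth (r₀ * m ^ k) hr1
  have hcast : ((r₀ * m ^ k : ℕ) : ℝ) = (r₀:ℝ) * (m:ℝ)^k := by push_cast; ring
  have h1 : (2:ℝ)^k * ((m:ℝ)^d)^k ≤ c * (r₀:ℝ)^d * ((m:ℝ)^d)^k := by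
    calc (2:ℝ)^k * ((m:ℝ)^d)^k
        = (2 * (m:ℝ)^d)^k * 1 := by rw [mul_pow]; ring
      _ ≤ (2 * (m:ℝ)^d)^k * ((B ^ r₀).card : ℝ) := by
          apply mul_le_mul_of_nonneg_left hcard1; positivity
      _ ≤ ((B ^ (r₀ * m ^ k)).card : ℝ) := key k
      _ ≤ c * ((r₀ * m ^ k : ℕ) : ℝ)^d := hgb
      _ = c * (r₀:ℝ)^d * ((m:ℝ)^d)^k := by
          rw [hcast]; rw [mul_pow, ← pow_mul, ← pow_mul, Nat.mul_comm d k]; ring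
  have h2 : (2:ℝ)^k ≤ c * (r₀:ℝ)^d :=
    le_of_mul_le_mul_right (by linarith [h1]) (pow_pos hmd0 k)
  linarith
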